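/- For λ > 1/6, the function F₂(x) = (1/2)(x - 1/2)² + λ g(x) has no critical points in the open interval (0,1) excluding 1/2, i.e., for all x ∈ (0,1) with x ≠ 1/2, F₂'(x) ≠ 0; moreover, neither one-sided derivative at x = 1/2 vanishes in a way making it a local minimizer, so the only local minimizers of F₂ on [0,1] are x = 0 and x = 1. -/

import Mathlib

noncomputable def g (x : ℝ) : ℝ := if x ≤ 1/2 then x^3 - 3*x^2 + 3*x else 1 - x^3

theorem stmt_13 (lam : ℝ) (hlam : 1/6 < lam) :
    (∀ x ∈ Set.Ioo (0:ℝ) (1/2), x - 1/2 + lam*(3*x^2 - 6*x + 3) ≠ 0) ∧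
    (∀ x ∈ Set.Ioo (1/2:ℝ) 1, x - 1/2 - 3*lam*x^2 ≠ 0) ∧
    (∀ x ∈ Set.Icc (0:ℝ) 1,
      IsLocalMinOn (fun y => (1/2)*(y - 1/2)^2 + lam * g y) (Set.Icc (0:ℝ) 1) x →
      x = 0 ∨ x = 1) := by
  set F : ℝ → ℝ := fun y => (1/2)*(y - 1/2)^2 + lam * g y with hF
  set P₁ : ℝ → ℝ := fun y => (1/2)*(y - 1/2)^2 + lam * (y^3 - 3*y^2 + 3*y) with hP1
  set P₂ : ℝ → ℝ := fun y => (1/2)*(y - 1/2)^2 + lam * (1 - y^3) with hP2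
  -- positivity of left derivative on (0, 1/2]
  have hpos : ∀ x : ℝ, 0 < x → x ≤ 1/2 → 0 < x - 1/2 + lam*(3*x^2 - 6*x + 3) := by
    intro x hx _
    nlinarith [mul_nonneg (by linarith : (0:ℝ) ≤ lam - 1/6) (sq_nonneg (x-1)),
      mul_pos hx hx]
  have hneg : ∀ x : ℝ, 1/2 ≤ x → x < 1 → x - 1/2 - 3*lam*x^2 < 0 := by
    intro x hx hx1
    nlinarith [mul_nonneg (by linarith : (0:ℝ) ≤ lam - 1/6) (sq_nonneg x),
      sq_nonneg (x-1), mul_pos (by linarith : (0:ℝ) < 1 - x) (by linarith : (0:ℝ) < 1 - x)]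
  -- derivatives
  have hd1 : ∀ x : ℝ, HasDerivAt P₁ (x - 1/2 + lam*(3*x^2 - 6*x + 3)) x := by
    intro x
    have ha : HasDerivAt (fun y:ℝ => y - 1/2) 1 x := (hasDerivAt_id x).sub_const _
    have hb := ha.pow 2
    have hc : HasDerivAt (fun y:ℝ => y^3 - 3*y^2 + 3*y) (3*x^2 - 6*x + 3) x := by
      have := ((hasDerivAt_pow 3 x).sub ((hasDerivAt_pow 2 x).const_mul 3)).add
        ((hasDerivAt_id x).const_mul 3)
      exact this.congr_deriv (by push_cast; ring)
    have := (hb.const_mul (1/2:ℝ)).add (hc.const_mul lam)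
    exact this.congr_deriv (by push_cast; ring)
  have hd2 : ∀ x : ℝ, HasDerivAt P₂ (x - 1/2 - 3*lam*x^2) x := by
    intro x
    have ha : HasDerivAt (fun y:ℝ => y - 1/2) 1 x := (hasDerivAt_id x).sub_const _
    have hb := ha.pow 2
    have hc : HasDerivAt (fun y:ℝ => 1 - y^3) (-(3*x^2)) x := by
      have := (hasDerivAt_const x (1:ℝ)).sub (hasDerivAt_pow 3 x)
      exact this.congr_deriv (by push_cast; ring)
    have := (hb.const_mul (1/2:ℝ)).add (hc.const_mul lam)
    exact this.congr_deriv (by push_cast; ring)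
  -- strict monotonicity of P₁ on [0,1/2]
  have hmono : StrictMonoOn P₁ (Set.Icc (0:ℝ) (1/2)) := by
    apply strictMonoOn_of_deriv_pos (convex_Icc _ _)
    · exact fun x _ => (hd1 x).continuousAt.continuousWithinAt
    · intro x hx
      rw [interior_Icc] at hx
      rw [(hd1 x).deriv]
      exact hpos x hx.1 hx.2.le
  have hanti : StrictAntiOn P₂ (Set.Icc (1/2:ℝ) 1) := by
    apply strictAntiOn_of_deriv_neg (convex_Icc _ _)
    · exact fun x _ => (hd2 x).continuousAt.continuousWithinAt
    · intro x hx
      rw [interior_Icc] at hx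
      rw [(hd2 x).deriv]
      exact hneg x hx.1.le hx.2
  -- F agrees with P₁ / P₂
  have hFe1 : ∀ y ∈ Set.Icc (0:ℝ) (1/2), F y = P₁ y := by
    intro y hy
    simp only [hF, hP1, g, if_pos hy.2]
  have hFe2 : ∀ y ∈ Set.Icc (1/2:ℝ) 1, F y = P₂ y := by
    intro y hy
    rcases eq_or_lt_of_le hy.1 with h | h
    · simp only [hF, hP2, g, ← h]
      norm_num
    · simp only [hF, hP2, g, if_neg (not_le.mpr h)]
  have hFmono : StrictMonoOn F (Set.Icc (0:ℝ) (1/2)) := by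
    intro a ha b hb hab
    rw [hFe1 a ha, hFe1 b hb]; exact hmono ha hb hab
  have hFanti : StrictAntiOn F (Set.Icc (1/2:ℝ) 1) := by
    intro a ha b hb hab
    rw [hFe2 a ha, hFe2 b hb]; exact hanti ha hb hab
  refine ⟨fun x hx => ne_of_gt (hpos x hx.1 hx.2.le),
    fun x hx => ne_of_lt (hneg x hx.1.le hx.2), ?_⟩
  intro x hx hmin
  by_contra hcon
  push_neg at hcon
  obtain ⟨hx0, hx1⟩ := hcon
  have hev : ∀ᶠ y in nhdsWithin x (Set.Icc (0:ℝ) 1), F x ≤ F y := hmin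
  obtain ⟨ε, hε, hb⟩ := Metric.mem_nhdsWithin_iff.mp hev
  rcases le_or_gt x (1/2) with hhalf | hhalf
  · -- x ∈ (0, 1/2], take point slightly to the left
    have hx0' : 0 < x := lt_of_le_of_ne hx.1 (Ne.symm hx0)
    set y := max (x/2) (x - ε/2) with hy
    have hyx : y < x := max_lt (by linarith) (by linarith)
    have hy0 : 0 < y := lt_of_lt_of_le (by linarith) (le_max_left _ _)
    have hdist : dist y x < ε := by
      rw [Real.dist_eq, abs_of_nonpos (by linarith)]
      have : x - ε/2 ≤ y := le_max_right _ _
      linarith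
    have hmem : y ∈ Set.Icc (0:ℝ) 1 := ⟨hy0.le, by linarith [hx.2]⟩
    have h1 : F x ≤ F y := hb ⟨Metric.mem_ball.mpr hdist, hmem⟩
    have h2 := hFmono (a := y) ⟨hy0.le, by linarith⟩ ⟨hx.1, hhalf⟩ hyx
    linarith
  · -- x ∈ (1/2, 1), take point slightly to the right
    have hx1' : x < 1 := lt_of_le_of_ne hx.2 hx1
    set y := min ((x+1)/2) (x + ε/2) with hy
    have hyx : x < y := lt_min (by linarith) (by linarith)
    have hy1 : y < 1 := lt_of_le_of_lt (min_le_left _ _) (by linarith)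
    have hdist : dist y x < ε := by
      rw [Real.dist_eq, abs_of_nonneg (by linarith)]
      have : y ≤ x + ε/2 := min_le_right _ _
      linarith
    have hmem : y ∈ Set.Icc (0:ℝ) 1 := ⟨by linarith, hy1.le⟩
    have h1 : F x ≤ F y := hb ⟨Metric.mem_ball.mpr hdist, hmem⟩
    have h2 := hFanti (a := x) ⟨hhalf.le, hx.2⟩ ⟨by linarith, hy1.le⟩ hyx
    linarith
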